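/- Let N ≥ 1 and r ≥ 1 be integers, t_min > 0, β > 0, and 0 ≤ τ_est with t_min ≤ D − τ_est ≤ D. Let (T_{j,k}), for j = 1, ..., N and k = 1, ..., r+1, be mutually independent Pareto(t_min, β) random variables. Say task j fails if T_{j,1} > D and T_{j,k} > D − τ_est for every k = 2, ..., r+1. Then the probability that no task fails equals (1 − t_min^{β·(r+1)}/(D^β · (D − τ_est)^{β·r}))^N. -/

import Mathlib

open MeasureTheory ProbabilityTheory Set

/-- A real random variable `X` is Pareto(`tmin`, `β`): `P(X > t) = (tmin/t)^β` for `t ≥ tmin`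
and `P(X > t) = 1` for `t < tmin`. -/
def IsPareto {Ω : Type*} [MeasurableSpace Ω] (μ : Measure Ω) (X : Ω → ℝ)
    (tmin β : ℝ) : Prop :=
  Measurable X ∧
    (∀ t : ℝ, tmin ≤ t → μ {ω | t < X ω} = ENNReal.ofReal ((tmin / t) ^ β)) ∧
    (∀ t : ℝ, t < tmin → μ {ω | t < X ω} = 1)

section AuxGrouping

variable {Ω : Type*} [MeasurableSpace Ω] {μ : Measure Ω}

/-- Grouping lemma: if the doubly-indexed family `f : ι × κ → Ω → ℝ` is iIndepFun, then for
sets `B p = f p ⁻¹' Ioi (c p)`, the measure of a double bInter is the double product. -/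
lemma grouped_meas_biInter {ι κ : Type*} [DecidableEq ι] [DecidableEq κ]
    (f : ι × κ → Ω → ℝ) (c : ι × κ → ℝ)
    (hindep : iIndepFun f μ)
    (S : Finset ι) (s : ι → Finset κ) :
    μ (⋂ j ∈ S, ⋂ k ∈ s j, f (j, k) ⁻¹' Ioi (c (j, k)))
      = ∏ j ∈ S, ∏ k ∈ s j, μ (f (j, k) ⁻¹' Ioi (c (j, k))) := by
  classical
  set P : Finset (ι × κ) := S.biUnion (fun j => (s j).image (fun k => (j, k))) with hP
  have hmemP : ∀ p : ι × κ, p ∈ P ↔ p.1 ∈ S ∧ p.2 ∈ s p.1 := by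
    intro p
    simp only [hP, Finset.mem_biUnion, Finset.mem_image]
    constructor
    · rintro ⟨j, hj, k, hk, rfl⟩; exact ⟨hj, hk⟩
    · rintro ⟨h1, h2⟩; exact ⟨p.1, h1, p.2, h2, rfl⟩
  have h1 : (⋂ j ∈ S, ⋂ k ∈ s j, f (j, k) ⁻¹' Ioi (c (j, k)))
      = ⋂ p ∈ P, f p ⁻¹' Ioi (c p) := by
    ext ω
    simp only [mem_iInter, hmemP]
    constructor
    · rintro h ⟨j, k⟩ ⟨hj, hk⟩; exact h j hj k hk
    · intro h j hj k hk; exact h (j, k) ⟨hj, hk⟩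
  rw [h1, hindep.meas_biInter (fun p _ => ⟨Ioi (c p), measurableSet_Ioi, rfl⟩)]
  rw [Finset.prod_biUnion]
  · refine Finset.prod_congr rfl fun j _ => ?_
    rw [Finset.prod_image]
    intro a _ b _ h
    exact (Prod.mk.injEq _ _ _ _ ▸ h).2
  · intro a _ b _ hab
    simp only [Finset.disjoint_left, Finset.mem_image]
    rintro p ⟨k, _, rfl⟩ ⟨k', _, h⟩
    exact hab (Prod.mk.injEq _ _ _ _ ▸ h).1.symm

lemma grouped_iIndep {ι κ : Type*} [DecidableEq ι] [DecidableEq κ]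
    (f : ι × κ → Ω → ℝ) (c : ι × κ → ℝ)
    (hmeas : ∀ p, Measurable (f p))
    (hindep : iIndepFun f μ) :
    iIndep (fun j => MeasurableSpace.generateFrom
      {t | ∃ s : Finset κ, t = ⋂ k ∈ s, f (j, k) ⁻¹' Ioi (c (j, k))}) μ := by
  classical
  refine iIndepSets.iIndep ?_ _ ?_ (fun _ => rfl) ?_
  · intro j
    refine MeasurableSpace.generateFrom_le ?_
    rintro t ⟨s, rfl⟩
    exact MeasurableSet.biInter s.countable_toSet
      (fun k _ => (hmeas (j, k)) measurableSet_Ioi)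
  · rintro j t1 ⟨s1, rfl⟩ t2 ⟨s2, rfl⟩ -
    refine ⟨s1 ∪ s2, ?_⟩
    ext ω
    simp only [mem_inter_iff, mem_iInter, Finset.mem_union]
    constructor
    · rintro ⟨h1, h2⟩ k (hk | hk)
      exacts [h1 k hk, h2 k hk]
    · intro h
      exact ⟨fun k hk => h k (Or.inl hk), fun k hk => h k (Or.inr hk)⟩
  · rw [iIndepSets_iff]
    intro S g hg
    have hs : ∀ j ∈ S, ∃ s : Finset κ, g j = ⋂ k ∈ s, f (j, k) ⁻¹' Ioi (c (j, k)) :=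
      fun j hj => hg j hj
    choose! s hs' using hs
    have h1 : (⋂ j ∈ S, g j) = ⋂ j ∈ S, ⋂ k ∈ s j, f (j, k) ⁻¹' Ioi (c (j, k)) :=
      iInter₂_congr hs'
    have h2 : ∀ j ∈ S, μ (g j) = ∏ k ∈ s j, μ (f (j, k) ⁻¹' Ioi (c (j, k))) := by
      intro j hj
      rw [hs' j hj]
      have := grouped_meas_biInter f c hindep {j} s
      simpa using this
    rw [h1, grouped_meas_biInter f c hindep S s]
    exact (Finset.prod_congr rfl h2).symm

end AuxGrouping

/-- paper's Theorem 3, PoCD of Speculative-Restart: task `j` fails iff its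
original attempt `T j 0` exceeds `D` and each of the `r` extra attempts `T j k` (`k ≠ 0`)
exceeds `D − τ_est`; the probability that no task fails is
`(1 − tmin^{β(r+1)}/(D^β (D−τ_est)^{βr}))^N`. -/
theorem pocd_speculative_restart
    {Ω : Type*} [MeasurableSpace Ω] (μ : Measure Ω) [IsProbabilityMeasure μ]
    (N r : ℕ) (hN : 1 ≤ N) (hr : 1 ≤ r) (tmin β D τest : ℝ)
    (htmin : 0 < tmin) (hβ : 0 < β) (hτest : 0 ≤ τest)
    (h1 : tmin ≤ D - τest) (h2 : D - τest ≤ D)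
    (T : Fin N → Fin (r + 1) → Ω → ℝ)
    (hindep : iIndepFun
      (fun p : Fin N × Fin (r + 1) => T p.1 p.2) μ)
    (hpareto : ∀ j k, IsPareto μ (T j k) tmin β) :
    μ {ω | ∀ j, ¬ (D < T j 0 ω ∧ ∀ k, k ≠ 0 → D - τest < T j k ω)}
      = ENNReal.ofReal
          ((1 - tmin ^ (β * (r + 1 : ℝ)) / (D ^ β * (D - τest) ^ (β * (r : ℝ)))) ^ N) := by
  classical
  have hDτ : 0 < D - τest := lt_of_lt_of_le htmin h1
  have hD : 0 < D := lt_of_lt_of_le hDτ h2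
  set c : Fin (r + 1) → ℝ := fun k => if k = 0 then D else D - τest with hc
  set f : Fin N × Fin (r + 1) → Ω → ℝ := fun p => T p.1 p.2 with hf
  have hmeas : ∀ p, Measurable (f p) := fun p => (hpareto p.1 p.2).1
  have hindep' : iIndepFun f μ := hindep
  have hct : ∀ k : Fin (r + 1), tmin ≤ c k := by
    intro k
    by_cases h : k = 0 <;> simp [hc, h, h1.trans h2, h1]
  have hBμ : ∀ p : Fin N × Fin (r + 1),
      μ (f p ⁻¹' Ioi (c p.2)) = ENNReal.ofReal ((tmin / c p.2) ^ β) := by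
    intro p
    exact (hpareto p.1 p.2).2.1 _ (hct p.2)
  set Fail : Fin N → Set Ω := fun j => ⋂ k, f (j, k) ⁻¹' Ioi (c k) with hFail
  have hgroup := grouped_iIndep f (fun p => c p.2) hmeas hindep'
  have hFailmem : ∀ j, Fail j ∈
      {t | ∃ s : Finset (Fin (r + 1)), t = ⋂ k ∈ s, f (j, k) ⁻¹' Ioi (c k)} := by
    intro j
    exact ⟨Finset.univ, by simp [hFail]⟩
  have hmeasFail : ∀ j, MeasurableSet (Fail j) :=
    fun j => MeasurableSet.iInter fun k => (hmeas (j, k)) measurableSet_Ioi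
  have hSet : {ω | ∀ j, ¬ (D < T j 0 ω ∧ ∀ k, k ≠ 0 → D - τest < T j k ω)}
      = ⋂ j, (Fail j)ᶜ := by
    ext ω
    simp only [mem_setOf_eq, mem_iInter, mem_compl_iff, hFail, mem_preimage, mem_Ioi, hf]
    refine forall_congr' fun j => not_congr ?_
    constructor
    · intro h
      intro k
      by_cases hk : k = 0
      · subst hk; simpa [hc] using h.1
      · simpa [hc, hk] using h.2 k hk
    · intro h
      exact ⟨by simpa [hc] using h 0, fun k hk => by simpa [hc, hk] using h k⟩
  -- nonnegativity / bounds for the real quantities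
  have hq0nn : (0:ℝ) ≤ (tmin / D) ^ β := Real.rpow_nonneg (div_nonneg htmin.le hD.le) _
  have hq1nn : (0:ℝ) ≤ (tmin / (D - τest)) ^ β :=
    Real.rpow_nonneg (div_nonneg htmin.le hDτ.le) _
  have hq0le : (tmin / D) ^ β ≤ 1 :=
    Real.rpow_le_one (div_nonneg htmin.le hD.le)
      ((div_le_one hD).mpr (h1.trans h2)) hβ.le
  have hq1le : (tmin / (D - τest)) ^ β ≤ 1 :=
    Real.rpow_le_one (div_nonneg htmin.le hDτ.le) ((div_le_one hDτ).mpr h1) hβ.le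
  have hqnn : (0:ℝ) ≤ (tmin / D) ^ β * ((tmin / (D - τest)) ^ β) ^ r :=
    mul_nonneg hq0nn (pow_nonneg hq1nn r)
  have hqle : (tmin / D) ^ β * ((tmin / (D - τest)) ^ β) ^ r ≤ 1 := by
    calc (tmin / D) ^ β * ((tmin / (D - τest)) ^ β) ^ r ≤ 1 * 1 ^ r :=
          mul_le_mul hq0le (pow_le_pow_left₀ hq1nn hq1le r)
            (pow_nonneg hq1nn r) zero_le_one
      _ = 1 := by simp
  have hμFail : ∀ j, μ (Fail j)
      = ENNReal.ofReal ((tmin / D) ^ β * ((tmin / (D - τest)) ^ β) ^ r) := by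
    intro j
    have hL : Fail j = ⋂ j' ∈ ({j} : Finset (Fin N)), ⋂ k ∈ Finset.univ,
        f (j', k) ⁻¹' Ioi (c k) := by simp [hFail]
    rw [hL, grouped_meas_biInter f (fun p => c p.2) hindep' {j} (fun _ => Finset.univ),
      Finset.prod_singleton]
    have hck : ∀ k : Fin (r + 1), μ (f (j, k) ⁻¹' Ioi (c k))
        = ENNReal.ofReal ((tmin / c k) ^ β) := fun k => hBμ (j, k)
    rw [Finset.prod_congr rfl (fun k _ => hck k), Fin.prod_univ_succ]
    have hc0 : c 0 = D := by simp [hc]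
    have hcs : ∀ i : Fin r, c i.succ = D - τest := by
      intro i; simp [hc, Fin.succ_ne_zero]
    simp only [hc0, hcs, Finset.prod_const, Finset.card_univ, Fintype.card_fin]
    rw [ENNReal.ofReal_mul hq0nn, ENNReal.ofReal_pow hq1nn]
  have hcompl : ∀ j, μ ((Fail j)ᶜ)
      = ENNReal.ofReal (1 - (tmin / D) ^ β * ((tmin / (D - τest)) ^ β) ^ r) := by
    intro j
    rw [measure_compl (hmeasFail j) (measure_ne_top μ _), measure_univ, hμFail j,
      ENNReal.ofReal_sub 1 hqnn, ENNReal.ofReal_one]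
  rw [hSet, hgroup.meas_iInter
    (fun j => (MeasurableSet.compl (MeasurableSpace.measurableSet_generateFrom (hFailmem j)))),
    Finset.prod_congr rfl (fun j _ => hcompl j), Finset.prod_const, Finset.card_univ,
    Fintype.card_fin, ← ENNReal.ofReal_pow (by linarith)]
  congr 2
  -- q = tmin^{β(r+1)} / (D^β (D-τest)^{βr})
  rw [← Real.rpow_natCast ((tmin / (D - τest)) ^ β) r,
    ← Real.rpow_mul (div_nonneg htmin.le hDτ.le),
    Real.div_rpow htmin.le hD.le, Real.div_rpow htmin.le hDτ.le,
    div_mul_div_comm, ← Real.rpow_add htmin,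
    show β + β * (r : ℝ) = β * ((r : ℝ) + 1) by ring]
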